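/- arXiv:2305.09622 — 3 statements merged into one kernel-verified Lean document; each statement's English description precedes it below -/
import Mathlib

section
/- For every D > 1, λ > 0 and x₀ ∈ ℝ, the function U(x,y) = 2 log( 2λ / ((x-x₀)² + (y+Dλ)² - λ²) ) solves -ΔU = -2 e^U in the upper half-plane ℝ²₊ and ∂_ν U = 2D e^{U/2} on the boundary {y = 0}, where ∂_ν = -∂_y. -/
open Real

/-- The standard bubble `U(x,y) = 2 log(2λ/((x-x₀)² + (y+Dλ)² - λ²))` on the half-plane. -/
noncomputable def bubble2 (D l x₀ : ℝ) (x y : ℝ) : ℝ :=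
  2 * Real.log (2 * l / ((x - x₀) ^ 2 + (y + D * l) ^ 2 - l ^ 2))

lemma hasDerivAt_bub (l m k p : ℝ) (hl : l ≠ 0) (hQ : (p - m) ^ 2 + k ≠ 0) :
    HasDerivAt (fun t => 2 * Real.log (2 * l / ((t - m) ^ 2 + k)))
      (-4 * (p - m) / ((p - m) ^ 2 + k)) p := by
  have hQ' : HasDerivAt (fun t => (t - m) ^ 2 + k) (2 * (p - m)) p := by
    have := (((hasDerivAt_id p).sub_const m).pow 2).add_const k
    simpa [mul_comm] using this
  have hf : HasDerivAt (fun t => 2 * l / ((t - m) ^ 2 + k))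
      ((0 * ((p - m) ^ 2 + k) - 2 * l * (2 * (p - m))) / ((p - m) ^ 2 + k) ^ 2) p :=
    (hasDerivAt_const p (2 * l)).div hQ' hQ
  have hne : 2 * l / ((p - m) ^ 2 + k) ≠ 0 :=
    div_ne_zero (by simpa using hl) hQ
  have := (hf.log hne).const_mul 2
  refine this.congr_deriv ?_
  field_simp
  ring

lemma deriv2_bub (l m k p : ℝ) (hl : 0 < l) (hQ : 0 < (p - m) ^ 2 + k) :
    deriv (fun s => deriv (fun t => 2 * Real.log (2 * l / ((t - m) ^ 2 + k))) s) p
      = (-4 * ((p - m) ^ 2 + k) + 8 * (p - m) ^ 2) / ((p - m) ^ 2 + k) ^ 2 := by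
  have hev : (fun s => deriv (fun t => 2 * Real.log (2 * l / ((t - m) ^ 2 + k))) s)
      =ᶠ[nhds p] (fun s => -4 * (s - m) / ((s - m) ^ 2 + k)) := by
    have hopen : IsOpen {s : ℝ | 0 < (s - m) ^ 2 + k} := by
      apply isOpen_lt continuous_const
      continuity
    filter_upwards [hopen.mem_nhds hQ] with s hs
    exact (hasDerivAt_bub l m k s hl.ne' hs.ne').deriv
  rw [hev.deriv_eq]
  have hQ' : HasDerivAt (fun s : ℝ => (s - m) ^ 2 + k) (2 * (p - m)) p := by
    have := (((hasDerivAt_id p).sub_const m).pow 2).add_const k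
    simpa [mul_comm] using this
  have hnum : HasDerivAt (fun s : ℝ => -4 * (s - m)) (-4) p := by
    have := ((hasDerivAt_id p).sub_const m).const_mul (-4)
    simpa using this
  refine ((hnum.div hQ' hQ.ne').deriv).trans ?_
  field_simp
  ring

/-- For `D > 1`, `λ > 0`, `x₀ ∈ ℝ`, the bubble solves `-ΔU = -2 e^U` in the upper
half-plane and `∂_ν U = 2D e^{U/2}` on `{y = 0}`, where `∂_ν = -∂_y`. -/
theorem bubble2_solves (D l x₀ : ℝ) (hD : 1 < D) (hl : 0 < l) :
    (∀ x y : ℝ, 0 < y →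
      -(deriv (fun s => deriv (fun t => bubble2 D l x₀ t y) s) x +
          deriv (fun s => deriv (fun t => bubble2 D l x₀ x t) s) y) =
        -2 * Real.exp (bubble2 D l x₀ x y)) ∧
    (∀ x : ℝ, -(deriv (fun t => bubble2 D l x₀ x t) 0) =
        2 * D * Real.exp (bubble2 D l x₀ x 0 / 2)) := by
  have hfx : ∀ y : ℝ, (fun t => bubble2 D l x₀ t y)
      = fun t => 2 * Real.log (2 * l / ((t - x₀) ^ 2 + ((y + D * l) ^ 2 - l ^ 2))) := by
    intro y
    funext t
    unfold bubble2
    ring_nf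
  have hfy : ∀ x : ℝ, (fun t => bubble2 D l x₀ x t)
      = fun t => 2 * Real.log (2 * l / ((t - (-(D * l))) ^ 2 + ((x - x₀) ^ 2 - l ^ 2))) := by
    intro x
    funext t
    unfold bubble2
    ring_nf
  constructor
  · intro x y hy
    set q : ℝ := (x - x₀) ^ 2 + (y + D * l) ^ 2 - l ^ 2 with hq
    have h0 : 0 < y + D * l - l := by nlinarith
    have h0' : 0 < y + D * l + l := by nlinarith
    have hqpos : 0 < q := by nlinarith [sq_nonneg (x - x₀), mul_pos h0 h0']
    have h1 : deriv (fun s => deriv (fun t => bubble2 D l x₀ t y) s) x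
        = (-4 * q + 8 * (x - x₀) ^ 2) / q ^ 2 := by
      rw [hfx y]
      have := deriv2_bub l x₀ ((y + D * l) ^ 2 - l ^ 2) x hl (by nlinarith [sq_nonneg (x - x₀), mul_pos h0 h0'])
      rw [this]
      congr 1 <;> ring
    have h2 : deriv (fun s => deriv (fun t => bubble2 D l x₀ x t) s) y
        = (-4 * q + 8 * (y + D * l) ^ 2) / q ^ 2 := by
      rw [hfy x]
      have := deriv2_bub l (-(D * l)) ((x - x₀) ^ 2 - l ^ 2) y hl (by nlinarith [sq_nonneg (x - x₀), mul_pos h0 h0'])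
      rw [this]
      congr 1 <;> ring
    have hexp : Real.exp (bubble2 D l x₀ x y) = (2 * l / q) ^ 2 := by
      unfold bubble2
      rw [show (x - x₀) ^ 2 + (y + D * l) ^ 2 - l ^ 2 = q from hq.symm,
        show (2 : ℝ) * Real.log (2 * l / q) = Real.log ((2 * l / q) ^ 2) from by
          rw [Real.log_pow]; push_cast; ring]
      exact Real.exp_log (by positivity)
    rw [h1, h2, hexp]
    field_simp
    ring
  · intro x
    set q : ℝ := (x - x₀) ^ 2 + (0 + D * l) ^ 2 - l ^ 2 with hq
    have h0 : 0 < D * l - l := by nlinarith [mul_pos (sub_pos.mpr hD) hl]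
    have hqpos : 0 < q := by
      nlinarith [sq_nonneg (x - x₀), mul_pos h0 (show 0 < D * l + l by nlinarith)]
    have h1 : deriv (fun t => bubble2 D l x₀ x t) 0 = -4 * (0 - -(D * l)) / q := by
      rw [hfy x]
      have := (hasDerivAt_bub l (-(D * l)) ((x - x₀) ^ 2 - l ^ 2) 0 hl.ne'
        (by nlinarith [sq_nonneg (x - x₀), mul_pos h0 (show 0 < D * l + l by nlinarith)])).deriv
      rw [this]
      congr 1 <;> ring
    have hexp : Real.exp (bubble2 D l x₀ x 0 / 2) = 2 * l / q := by
      unfold bubble2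
      rw [show 2 * Real.log (2 * l / ((x - x₀) ^ 2 + (0 + D * l) ^ 2 - l ^ 2)) / 2
        = Real.log (2 * l / q) from by rw [hq]; ring, Real.exp_log (by positivity)]
    rw [h1, hexp]
    field_simp
    ring
end

section
/- For D > 1, ∫_{ℝ²₊} dx dy / (x² + (y+D)² - 1)² = (π/(2√(D²-1))) (D - √(D²-1)). -/
open MeasureTheory Real Filter Topology Set

lemma hasDerivAt_F (a : ℝ) (ha : 0 < a) (x : ℝ) :
    HasDerivAt (fun x : ℝ => x / (2 * a ^ 2 * (x ^ 2 + a ^ 2))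
        + 1 / (2 * a ^ 3) * Real.arctan (x / a))
      (1 / (x ^ 2 + a ^ 2) ^ 2) x := by
  have hx2 : (0:ℝ) < x ^ 2 + a ^ 2 := by positivity
  have h1 : HasDerivAt (fun x : ℝ => x / (2 * a ^ 2 * (x ^ 2 + a ^ 2)))
      ((1 * (2 * a ^ 2 * (x ^ 2 + a ^ 2)) - x * (2 * a ^ 2 * (2 * x)))
        / (2 * a ^ 2 * (x ^ 2 + a ^ 2)) ^ 2) x := by
    have hd : HasDerivAt (fun x : ℝ => 2 * a ^ 2 * (x ^ 2 + a ^ 2)) (2 * a ^ 2 * (2 * x)) x := by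
      have h : HasDerivAt (fun x : ℝ => x ^ 2 + a ^ 2) (2 * x) x := by
        simpa using (hasDerivAt_pow 2 x).add_const (a ^ 2)
      exact h.const_mul _
    exact (hasDerivAt_id x).div hd (by positivity)
  have h2 : HasDerivAt (fun x : ℝ => Real.arctan (x / a))
      (1 / (1 + (x / a) ^ 2) * (1 / a)) x := by
    have := (Real.hasDerivAt_arctan (x / a)).comp x ((hasDerivAt_id x).div_const a)
    simpa [one_div, Function.comp_def] using this
  have := h1.add (h2.const_mul (1 / (2 * a ^ 3)))
  refine this.congr_deriv ?_
  have h1a : (1:ℝ) + (x / a) ^ 2 ≠ 0 := by positivity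
  field_simp
  ring

lemma tendsto_F (a : ℝ) (ha : 0 < a) :
    Tendsto (fun x : ℝ => x / (2 * a ^ 2 * (x ^ 2 + a ^ 2))
        + 1 / (2 * a ^ 3) * Real.arctan (x / a)) atTop (𝓝 (π / (4 * a ^ 3))) := by
  have hT1 : Tendsto (fun x : ℝ => x / (2 * a ^ 2 * (x ^ 2 + a ^ 2))) atTop (𝓝 0) := by
    have hb : Tendsto (fun x : ℝ => 1 / (2 * a ^ 2) * x⁻¹) atTop (𝓝 (1 / (2 * a ^ 2) * 0)) :=
      tendsto_inv_atTop_zero.const_mul _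
    rw [mul_zero] at hb
    refine tendsto_of_tendsto_of_tendsto_of_le_of_le' tendsto_const_nhds hb ?_ ?_
    · filter_upwards [eventually_ge_atTop (1:ℝ)] with x hx
      positivity
    · filter_upwards [eventually_ge_atTop (1:ℝ)] with x hx
      have hx0 : (0:ℝ) < x := by linarith
      have hB : 1 / (2 * a ^ 2) * x⁻¹ * (2 * a ^ 2 * (x ^ 2 + a ^ 2))
          = (x ^ 2 + a ^ 2) / x := by field_simp
      rw [div_le_iff₀ (by positivity), hB, le_div_iff₀ hx0]
      nlinarith [sq_nonneg a]
  have hT2 : Tendsto (fun x : ℝ => 1 / (2 * a ^ 3) * Real.arctan (x / a)) atTop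
      (𝓝 (1 / (2 * a ^ 3) * (π / 2))) := by
    have hxa : Tendsto (fun x : ℝ => x / a) atTop atTop := tendsto_id.atTop_div_const ha
    exact (Real.tendsto_arctan_atTop.mono_right nhdsWithin_le_nhds |>.comp hxa).const_mul _
  have := hT1.add hT2
  rw [zero_add] at this
  convert this using 2
  ring

lemma integral_line (a : ℝ) (ha : 0 < a) :
    Integrable (fun x : ℝ => 1 / (x ^ 2 + a ^ 2) ^ 2) ∧
    ∫ x : ℝ, 1 / (x ^ 2 + a ^ 2) ^ 2 = π / (2 * a ^ 3) := by
  have hd : ∀ x ∈ Ici (0:ℝ), HasDerivAt (fun x : ℝ => x / (2 * a ^ 2 * (x ^ 2 + a ^ 2))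
        + 1 / (2 * a ^ 3) * Real.arctan (x / a)) (1 / (x ^ 2 + a ^ 2) ^ 2) x :=
    fun x _ => hasDerivAt_F a ha x
  have hpos : ∀ x ∈ Ioi (0:ℝ), 0 ≤ 1 / (x ^ 2 + a ^ 2) ^ 2 := fun x _ => by positivity
  have hIoi : IntegrableOn (fun x : ℝ => 1 / (x ^ 2 + a ^ 2) ^ 2) (Ioi 0) :=
    integrableOn_Ioi_deriv_of_nonneg' hd hpos (tendsto_F a ha)
  have hval : ∫ x in Ioi (0:ℝ), 1 / (x ^ 2 + a ^ 2) ^ 2 = π / (4 * a ^ 3) := by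
    rw [integral_Ioi_of_hasDerivAt_of_nonneg' hd hpos (tendsto_F a ha)]
    simp
  have int_Iic : IntegrableOn (fun x : ℝ => 1 / (x ^ 2 + a ^ 2) ^ 2) (Iic 0) := by
    rw [← Measure.map_neg_eq_self (volume : Measure ℝ)]
    have m : MeasurableEmbedding fun x : ℝ => -x := (Homeomorph.neg ℝ).measurableEmbedding
    rw [m.integrableOn_map_iff]
    simp_rw [Function.comp_def, neg_preimage, neg_Iic, neg_zero, neg_sq]
    exact Iff.mpr integrableOn_Ici_iff_integrableOn_Ioi hIoi
  have hInt : Integrable (fun x : ℝ => 1 / (x ^ 2 + a ^ 2) ^ 2) := by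
    rw [← integrableOn_univ, ← Iic_union_Ioi (a := (0:ℝ))]
    exact int_Iic.union hIoi
  refine ⟨hInt, ?_⟩
  have h2 := integral_comp_abs (f := fun x : ℝ => 1 / (x ^ 2 + a ^ 2) ^ 2)
  simp_rw [sq_abs] at h2
  rw [h2, hval]; ring

lemma hasDerivAt_G (D : ℝ) (hD : 1 < D) (y : ℝ) (hy : 0 ≤ y) :
    HasDerivAt (fun y : ℝ => -(π/2) * ((y + D) / Real.sqrt ((y + D) ^ 2 - 1)))
      (π / (2 * Real.sqrt ((y + D) ^ 2 - 1) ^ 3)) y := by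
  have hu : 1 < y + D := by linarith
  have hden : (0:ℝ) < (y + D) ^ 2 - 1 := by nlinarith
  have hs : 0 < Real.sqrt ((y + D) ^ 2 - 1) := Real.sqrt_pos.2 hden
  have hs2 : Real.sqrt ((y + D) ^ 2 - 1) ^ 2 = (y + D) ^ 2 - 1 := Real.sq_sqrt hden.le
  have h1 : HasDerivAt (fun y : ℝ => (y + D) ^ 2 - 1) (2 * (y + D)) y := by
    have := (((hasDerivAt_id y).add_const D).pow 2).sub_const 1
    simpa using this
  have h2 := h1.sqrt hden.ne'
  have h3 := ((hasDerivAt_id y).add_const D).div h2 hs.ne'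
  have h4 := h3.const_mul (-(π/2))
  refine h4.congr_deriv ?_
  rw [id_eq]
  field_simp
  linear_combination (-1) * hs2

lemma tendsto_G (D : ℝ) (hD : 1 < D) :
    Tendsto (fun y : ℝ => -(π/2) * ((y + D) / Real.sqrt ((y + D) ^ 2 - 1))) atTop
      (𝓝 (-(π/2))) := by
  have h0 : Tendsto (fun y : ℝ => (y + D) ^ 2 - 1) atTop atTop := by
    have ht : Tendsto (fun y : ℝ => y + D) atTop atTop :=
      tendsto_atTop_add_const_right _ D tendsto_id
    have := tendsto_atTop_add_const_right _ (-1) (ht.atTop_mul_atTop₀ ht)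
    refine this.congr fun y => by ring
  have h1 : Tendsto (fun y : ℝ => 1 + 1 / ((y + D) ^ 2 - 1)) atTop (𝓝 (1 + 0)) := by
    refine tendsto_const_nhds.add ?_
    simpa [one_div, Function.comp_def] using tendsto_inv_atTop_zero.comp h0
  have h2 : Tendsto (fun y : ℝ => Real.sqrt (1 + 1 / ((y + D) ^ 2 - 1))) atTop
      (𝓝 (Real.sqrt (1 + 0))) := (Real.continuous_sqrt.tendsto _).comp h1
  have h3 : Tendsto (fun y : ℝ => (y + D) / Real.sqrt ((y + D) ^ 2 - 1)) atTop (𝓝 1) := by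
    norm_num at h2
    refine h2.congr' ?_
    filter_upwards [eventually_ge_atTop (0:ℝ)] with y hy
    have hu : 1 < y + D := by linarith
    have hden : (0:ℝ) < (y + D) ^ 2 - 1 := by nlinarith
    rw [show (1:ℝ) + ((y + D) ^ 2 - 1)⁻¹ = (y + D) ^ 2 / ((y + D) ^ 2 - 1) by field_simp; ring,
      Real.sqrt_div (by positivity), Real.sqrt_sq (by linarith)]
  have := h3.const_mul (-(π/2))
  simpa using this

lemma outer_integral (D : ℝ) (hD : 1 < D) :
    IntegrableOn (fun y : ℝ => π / (2 * Real.sqrt ((y + D) ^ 2 - 1) ^ 3)) (Ioi 0) ∧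
    ∫ y in Ioi (0:ℝ), π / (2 * Real.sqrt ((y + D) ^ 2 - 1) ^ 3)
      = -(π/2) - (-(π/2) * (D / Real.sqrt (D ^ 2 - 1))) := by
  have hd : ∀ y ∈ Ici (0:ℝ), HasDerivAt
      (fun y : ℝ => -(π/2) * ((y + D) / Real.sqrt ((y + D) ^ 2 - 1)))
      (π / (2 * Real.sqrt ((y + D) ^ 2 - 1) ^ 3)) y := fun y hy => hasDerivAt_G D hD y hy
  have hpos : ∀ y ∈ Ioi (0:ℝ), 0 ≤ π / (2 * Real.sqrt ((y + D) ^ 2 - 1) ^ 3) := by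
    intro y hy
    have hs : 0 < Real.sqrt ((y + D) ^ 2 - 1) := Real.sqrt_pos.2 (by nlinarith [hy.out])
    positivity
  refine ⟨integrableOn_Ioi_deriv_of_nonneg' hd hpos (tendsto_G D hD), ?_⟩
  rw [integral_Ioi_of_hasDerivAt_of_nonneg' hd hpos (tendsto_G D hD)]
  norm_num

/-- For `D > 1`, `∫_{ℝ²₊} dx dy/(x² + (y+D)² - 1)² = (π/(2√(D²-1)))(D - √(D²-1))`. -/
theorem integral_halfplane_bubble (D : ℝ) (hD : 1 < D) :
    ∫ p in {p : ℝ × ℝ | 0 < p.2}, 1 / (p.1 ^ 2 + (p.2 + D) ^ 2 - 1) ^ 2 =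
      π / (2 * Real.sqrt (D ^ 2 - 1)) * (D - Real.sqrt (D ^ 2 - 1)) := by
  set g : ℝ × ℝ → ℝ := fun q => 1 / (q.2 ^ 2 + (q.1 + D) ^ 2 - 1) ^ 2 with hg
  have hslice : ∀ y ∈ Ioi (0:ℝ), Integrable (fun x => g (y, x)) ∧
      (∫ x, g (y, x)) = π / (2 * Real.sqrt ((y + D) ^ 2 - 1) ^ 3) := by
    intro y hy
    have hden : (0:ℝ) < (y + D) ^ 2 - 1 := by nlinarith [hy.out]
    have ha : 0 < Real.sqrt ((y + D) ^ 2 - 1) := Real.sqrt_pos.2 hden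
    have hsq : Real.sqrt ((y + D) ^ 2 - 1) ^ 2 = (y + D) ^ 2 - 1 := Real.sq_sqrt hden.le
    have h := integral_line (Real.sqrt ((y + D) ^ 2 - 1)) ha
    have hfun : (fun x : ℝ => 1 / (x ^ 2 + Real.sqrt ((y + D) ^ 2 - 1) ^ 2) ^ 2)
        = fun x => g (y, x) := by
      funext x; rw [hsq]; simp only [hg]; ring_nf
    rw [hfun] at h
    exact h
  have hmeas : AEStronglyMeasurable g
      (((volume : Measure ℝ).restrict (Ioi 0)).prod volume) := by
    apply Measurable.aestronglyMeasurable
    fun_prop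
  have hIntProd : Integrable g (((volume : Measure ℝ).restrict (Ioi 0)).prod volume) := by
    refine (integrable_prod_iff hmeas).2 ⟨?_, ?_⟩
    · filter_upwards [ae_restrict_mem measurableSet_Ioi] with y hy
      exact (hslice y hy).1
    · refine ((outer_integral D hD).1).congr ?_
      filter_upwards [ae_restrict_mem measurableSet_Ioi] with y hy
      rw [show (fun x => ‖g (y, x)‖) = fun x => g (y, x) from
        funext fun x => norm_of_nonneg (by simp only [hg]; positivity)]
      exact ((hslice y hy).2).symm
  have hIntOn : IntegrableOn g ((Ioi (0:ℝ)) ×ˢ (univ : Set ℝ))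
      ((volume : Measure ℝ).prod volume) := by
    rw [IntegrableOn, ← Measure.prod_restrict, Measure.restrict_univ]
    exact hIntProd
  have step1 : (∫ p in {p : ℝ × ℝ | 0 < p.2}, 1 / (p.1 ^ 2 + (p.2 + D) ^ 2 - 1) ^ 2)
      = ∫ q in (Ioi (0:ℝ)) ×ˢ (univ : Set ℝ), g q ∂((volume : Measure ℝ).prod volume) := by
    rw [show {p : ℝ × ℝ | 0 < p.2} = Prod.swap ⁻¹' ((Ioi (0:ℝ)) ×ˢ (univ : Set ℝ)) by
      ext p; simp [Set.mem_prod]]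
    rw [Measure.volume_eq_prod]
    exact Measure.measurePreserving_swap.setIntegral_preimage_emb
      MeasurableEquiv.prodComm.measurableEmbedding g _
  have step2 : (∫ q in (Ioi (0:ℝ)) ×ˢ (univ : Set ℝ), g q ∂((volume : Measure ℝ).prod volume))
      = ∫ y in Ioi (0:ℝ), ∫ x, g (y, x) := by
    rw [setIntegral_prod g hIntOn]
    simp [Measure.restrict_univ]
  have step3 : (∫ y in Ioi (0:ℝ), ∫ x, g (y, x))
      = ∫ y in Ioi (0:ℝ), π / (2 * Real.sqrt ((y + D) ^ 2 - 1) ^ 3) := by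
    refine setIntegral_congr_fun measurableSet_Ioi fun y hy => ?_
    exact (hslice y hy).2
  rw [step1, step2, step3, (outer_integral D hD).2]
  have hs : 0 < Real.sqrt (D ^ 2 - 1) := Real.sqrt_pos.2 (by nlinarith)
  field_simp
  ring
end

section
/- Let f : closed unit ball B̄ⁿ → ℝ be continuous, C¹ in the open ball, and suppose that as ξ → Sⁿ⁻¹, f(ξ) = f₀(ξ/|ξ|) + g_{ξ/|ξ|}(1-|ξ|) f₁(ξ/|ξ|) + o(g_{ξ/|ξ|}(1-|ξ|)), where g_σ : (0,1) → (0,∞) is increasing with g_σ(t) → 0 as t → 0. If f₁(ξ) > 0 at every point ξ ∈ Sⁿ⁻¹ where f₀ attains its global maximum, then f attains its maximum over B̄ⁿ at an interior point, and hence f has a critical point in the open ball Bⁿ. -/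
open Metric Set Filter

/-- If `f : B̄ⁿ → ℝ` is continuous on the closed ball, `C¹ in the open ball`, admits the
boundary expansion `f(ξ) = f₀(ξ/|ξ|) + g_{ξ/|ξ|}(1-|ξ|) f₁(ξ/|ξ|) + o(g_{ξ/|ξ|}(1-|ξ|))`
as `ξ → Sⁿ⁻¹`, and `f₁ > 0` at every global maximum point of `f₀` on the sphere, then
`f` attains its maximum over the closed ball at an interior point, which is a critical
point of `f`. -/
theorem max_attained_interior (n : ℕ) (hn : 1 ≤ n)
    (f f₀ f₁ : EuclideanSpace ℝ (Fin n) → ℝ)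
    (g : EuclideanSpace ℝ (Fin n) → ℝ → ℝ)
    (hf : ContinuousOn f (closedBall 0 1))
    (hf' : ContDiffOn ℝ 1 f (ball 0 1))
    (hf₀ : ContinuousOn f₀ (sphere 0 1))
    (hf_eq : ∀ σ ∈ sphere (0 : EuclideanSpace ℝ (Fin n)) 1, f σ = f₀ σ)
    (hg_pos : ∀ σ ∈ sphere (0 : EuclideanSpace ℝ (Fin n)) 1,
      ∀ t ∈ Ioo (0 : ℝ) 1, 0 < g σ t)
    (hg_mono : ∀ σ ∈ sphere (0 : EuclideanSpace ℝ (Fin n)) 1,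
      StrictMonoOn (g σ) (Ioo (0 : ℝ) 1))
    (hg_lim : ∀ σ ∈ sphere (0 : EuclideanSpace ℝ (Fin n)) 1,
      Tendsto (g σ) (nhdsWithin 0 (Ioi 0)) (nhds 0))
    (hexp : ∀ ε > (0 : ℝ), ∃ δ > (0 : ℝ), ∀ ξ : EuclideanSpace ℝ (Fin n),
      ξ ≠ 0 → 1 - δ < ‖ξ‖ → ‖ξ‖ < 1 →
      |f ξ - f₀ ((1 / ‖ξ‖) • ξ) - g ((1 / ‖ξ‖) • ξ) (1 - ‖ξ‖) * f₁ ((1 / ‖ξ‖) • ξ)| ≤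
        ε * g ((1 / ‖ξ‖) • ξ) (1 - ‖ξ‖))
    (hmax : ∀ ξ ∈ sphere (0 : EuclideanSpace ℝ (Fin n)) 1,
      (∀ η ∈ sphere (0 : EuclideanSpace ℝ (Fin n)) 1, f₀ η ≤ f₀ ξ) → 0 < f₁ ξ) :
    ∃ ξ₀ ∈ ball (0 : EuclideanSpace ℝ (Fin n)) 1,
      (∀ ξ ∈ closedBall (0 : EuclideanSpace ℝ (Fin n)) 1, f ξ ≤ f ξ₀) ∧
      fderiv ℝ f ξ₀ = 0 := by
  -- f attains a max on the compact closed ball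
  obtain ⟨ξ₀, hξ₀, hmaxon⟩ := (isCompact_closedBall (0 : EuclideanSpace ℝ (Fin n)) 1).exists_isMaxOn
    ⟨0, by simp⟩ hf
  rw [mem_closedBall_zero_iff] at hξ₀
  have hmax' : ∀ ξ ∈ closedBall (0 : EuclideanSpace ℝ (Fin n)) 1, f ξ ≤ f ξ₀ := fun ξ hξ =>
    hmaxon hξ
  -- the max point is interior
  have hint : ‖ξ₀‖ < 1 := by
    rcases lt_or_eq_of_le hξ₀ with h | h
    · exact h
    · exfalso
      have hσ : ξ₀ ∈ sphere (0 : EuclideanSpace ℝ (Fin n)) 1 := by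
        simp [mem_sphere_zero_iff_norm, h]
      -- f₀ attains its max at ξ₀
      have hf₁pos : 0 < f₁ ξ₀ := by
        apply hmax ξ₀ hσ
        intro η hη
        rw [← hf_eq η hη, ← hf_eq ξ₀ hσ]
        exact hmax' η (sphere_subset_closedBall hη)
      obtain ⟨δ, hδ, hδ'⟩ := hexp (f₁ ξ₀ / 2) (by linarith)
      set t : ℝ := min δ 1 / 2 with ht
      have ht0 : 0 < t := by positivity
      have ht1 : t < 1 := by
        have : min δ 1 ≤ 1 := min_le_right _ _
        simp only [ht]; linarith
      set ξ : EuclideanSpace ℝ (Fin n) := (1 - t) • ξ₀ with hξdef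
      have hnorm : ‖ξ‖ = 1 - t := by
        rw [hξdef, norm_smul, h, mul_one, Real.norm_eq_abs, abs_of_pos (by linarith)]
      have hξne : ξ ≠ 0 := by
        intro h0
        rw [h0, norm_zero] at hnorm; linarith
      have h1 : 1 - δ < ‖ξ‖ := by
        have : min δ 1 ≤ δ := min_le_left _ _
        rw [hnorm]; simp only [ht]; linarith
      have h2 : ‖ξ‖ < 1 := by rw [hnorm]; linarith
      have hproj : (1 / ‖ξ‖) • ξ = ξ₀ := by
        rw [hnorm, hξdef, smul_smul, one_div_mul_cancel (by linarith), one_smul]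
      have hkey := hδ' ξ hξne h1 h2
      rw [hproj, hnorm] at hkey
      have hsimp : 1 - (1 - t) = t := by ring
      rw [hsimp] at hkey
      have hgpos : 0 < g ξ₀ t := hg_pos ξ₀ hσ t ⟨ht0, ht1⟩
      have habs := abs_le.1 hkey
      have hgt : f ξ₀ < f ξ := by
        rw [hf_eq ξ₀ hσ]
        nlinarith [habs.1, habs.2]
      have hle : f ξ ≤ f ξ₀ := hmax' ξ (by
        rw [mem_closedBall_zero_iff]; linarith)
      linarith
  refine ⟨ξ₀, by simpa [mem_ball_zero_iff] using hint, hmax', ?_⟩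
  -- interior max is a critical point
  have hdiff : DifferentiableAt ℝ f ξ₀ := by
    have := (hf'.differentiableOn one_ne_zero).differentiableAt
      (isOpen_ball.mem_nhds (by simpa [mem_ball_zero_iff] using hint))
    exact this
  have hloc : IsLocalMax f ξ₀ := by
    filter_upwards [isOpen_ball.mem_nhds
      (show ξ₀ ∈ ball (0 : EuclideanSpace ℝ (Fin n)) 1 by simpa [mem_ball_zero_iff] using hint)]
      with x hx
    exact hmax' x (ball_subset_closedBall hx)
  exact hloc.fderiv_eq_zero
end
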